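/- The 12 triangular lattice points in a closed equiangular hexagon with side lengths alternating 1 and 2 form a 5-distance set: the set of squared pairwise distances between distinct points is exactly {1, 3, 4, 7, 9}. -/

import Mathlib

/-- Triangular lattice point a•(1,0) + b•(1/2, √3/2). -/
noncomputable def tri (a b : ℤ) : ℝ × ℝ :=
  ((a : ℝ) + (b : ℝ) / 2, (b : ℝ) * Real.sqrt 3 / 2)

/-- Squared Euclidean distance in the plane. -/
def sqd (p q : ℝ × ℝ) : ℝ := (p.1 - q.1) ^ 2 + (p.2 - q.2) ^ 2

/-- The triangular lattice. -/
noncomputable def triLattice : Set (ℝ × ℝ) := {p | ∃ a b : ℤ, p = tri a b}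

/-- Closed regular hexagon of side `k` centered at the origin with a vertex at `(k,0)`. -/
noncomputable def hexR (k : ℤ) : Set (ℝ × ℝ) :=
  convexHull ℝ ({tri k 0, tri 0 k, tri (-k) k, tri (-k) 0, tri 0 (-k), tri k (-k)} : Set (ℝ × ℝ))

/-- Closed (k, k+1)-equiangular hexagon with vertices at lattice points. -/
noncomputable def hexE (k : ℤ) : Set (ℝ × ℝ) :=
  convexHull ℝ ({tri k 0, tri k (k+1), tri 0 (2*k+1), tri (-(k+1)) (2*k+1),
    tri (-(k+1)) (k+1), tri 0 0} : Set (ℝ × ℝ))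

/-- Set of squared distances between distinct points of `X`. -/
def sqdSet (X : Set (ℝ × ℝ)) : Set ℝ := {d | ∃ p ∈ X, ∃ q ∈ X, p ≠ q ∧ d = sqd p q}

/-- The 12 lattice coordinates of points in the (1,2)-equiangular hexagon. -/
def hexPts : Finset (ℤ × ℤ) :=
  {(-2,2),(-2,3),(-1,1),(-1,2),(-1,3),(0,0),(0,1),(0,2),(0,3),(1,0),(1,1),(1,2)}

lemma sqd_tri (a b c d : ℤ) :
    sqd (tri a b) (tri c d) = (((a-c)^2 + (a-c)*(b-d) + (b-d)^2 : ℤ) : ℝ) := by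
  have h3 : Real.sqrt 3 ^ 2 = 3 := Real.sq_sqrt (by norm_num)
  simp only [sqd, tri]
  push_cast
  linear_combination ((b:ℝ)-d)^2/4 * h3

lemma tri_inj : Function.Injective (fun q : ℤ × ℤ => tri q.1 q.2) := by
  rintro ⟨a,b⟩ ⟨c,d⟩ h
  have hs : (0:ℝ) < Real.sqrt 3 := Real.sqrt_pos.mpr (by norm_num)
  simp only [tri, Prod.mk.injEq] at h
  obtain ⟨h1, h2⟩ := h
  have hbd : (b:ℝ) = d := by
    have h2' : (b:ℝ) * Real.sqrt 3 = (d:ℝ) * Real.sqrt 3 := by linarith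
    exact mul_right_cancel₀ (ne_of_gt hs) h2'
  have hb : b = d := by exact_mod_cast hbd
  have ha : a = c := by
    have : (a:ℝ) = c := by rw [hbd] at h1; linarith
    exact_mod_cast this
  simp [ha, hb]

lemma mem12 : ∀ a b : ℤ, (a,b) ∈ hexPts → tri a b ∈ hexE 1 := by
  have hconv : Convex ℝ (hexE 1) := convex_convexHull ℝ _
  have hv : ∀ a b : ℤ, (a,b) ∈ ({(1,0),(1,2),(0,3),(-2,3),(-2,2),(0,0)} : Finset (ℤ×ℤ)) →
      tri a b ∈ hexE 1 := by
    intro a b hab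
    apply subset_convexHull
    fin_cases hab <;> norm_num [Set.mem_insert_iff]
  have comb : ∀ (s t : ℝ) (a b c d x y : ℤ), 0 ≤ s → 0 ≤ t → s + t = 1 →
      (x:ℝ) = s * a + t * c → (y:ℝ) = s * b + t * d →
      tri a b ∈ hexE 1 → tri c d ∈ hexE 1 → tri x y ∈ hexE 1 := by
    intro s t a b c d x y hs ht hst hx hy h1 h2
    have := hconv h1 h2 hs ht hst
    convert this using 1
    simp only [tri, Prod.smul_mk, smul_eq_mul, Prod.mk_add_mk, Prod.mk.injEq]
    constructor
    · rw [hx]; ring_nf; nlinarith [hst, hy]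
    · rw [hy]; ring
  have p00 := hv 0 0 (by decide)
  have p10 := hv 1 0 (by decide)
  have p12 := hv 1 2 (by decide)
  have p03 := hv 0 3 (by decide)
  have pm23 := hv (-2) 3 (by decide)
  have pm22 := hv (-2) 2 (by decide)
  have pm11 : tri (-1) 1 ∈ hexE 1 :=
    comb (1/2) (1/2) (-2) 2 0 0 (-1) 1 (by norm_num) (by norm_num) (by norm_num)
      (by norm_num) (by norm_num) pm22 p00
  have pm13 : tri (-1) 3 ∈ hexE 1 :=
    comb (1/2) (1/2) (-2) 3 0 3 (-1) 3 (by norm_num) (by norm_num) (by norm_num)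
      (by norm_num) (by norm_num) pm23 p03
  have p11 : tri 1 1 ∈ hexE 1 :=
    comb (1/2) (1/2) 1 0 1 2 1 1 (by norm_num) (by norm_num) (by norm_num)
      (by norm_num) (by norm_num) p10 p12
  have p01 : tri 0 1 ∈ hexE 1 :=
    comb (2/3) (1/3) 0 0 0 3 0 1 (by norm_num) (by norm_num) (by norm_num)
      (by norm_num) (by norm_num) p00 p03
  have p02 : tri 0 2 ∈ hexE 1 :=
    comb (1/3) (2/3) 0 0 0 3 0 2 (by norm_num) (by norm_num) (by norm_num)
      (by norm_num) (by norm_num) p00 p03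
  have pm12 : tri (-1) 2 ∈ hexE 1 :=
    comb (1/2) (1/2) (-2) 2 0 2 (-1) 2 (by norm_num) (by norm_num) (by norm_num)
      (by norm_num) (by norm_num) pm22 p02
  intro a b hab
  fin_cases hab <;> assumption

lemma fa (a b : ℤ) : Real.sqrt 3 * (tri a b).1 - (tri a b).2 = Real.sqrt 3 * a := by
  simp only [tri]; ring

lemma fab (a b : ℤ) : Real.sqrt 3 * (tri a b).1 + (tri a b).2 = Real.sqrt 3 * ((a:ℝ)+b) := by
  simp only [tri]; ring

lemma bounds (a b : ℤ) (h : tri a b ∈ hexE 1) :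
    -2 ≤ a ∧ a ≤ 1 ∧ 0 ≤ b ∧ b ≤ 3 ∧ 0 ≤ a + b ∧ a + b ≤ 3 := by
  have hs : (0:ℝ) < Real.sqrt 3 := Real.sqrt_pos.mpr (by norm_num)
  have hfa : IsLinearMap ℝ (fun p : ℝ×ℝ => Real.sqrt 3 * p.1 - p.2) := by
    constructor
    · intro x y; simp; ring
    · intro c x; simp [Prod.smul_fst, Prod.smul_snd, smul_eq_mul]; ring
  have hfb : IsLinearMap ℝ (fun p : ℝ×ℝ => p.2) := by
    constructor
    · intro x y; simp
    · intro c x; simp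
  have hfab : IsLinearMap ℝ (fun p : ℝ×ℝ => Real.sqrt 3 * p.1 + p.2) := by
    constructor
    · intro x y; simp; ring
    · intro c x; simp [Prod.smul_fst, Prod.smul_snd, smul_eq_mul]; ring
  have keyle : ∀ (f : ℝ×ℝ → ℝ), IsLinearMap ℝ f → ∀ (c : ℝ),
      f (tri 1 0) ≤ c → f (tri 1 2) ≤ c → f (tri 0 3) ≤ c → f (tri (-2) 3) ≤ c →
      f (tri (-2) 2) ≤ c → f (tri 0 0) ≤ c → f (tri a b) ≤ c := by
    intro f hf c h1 h2 h3 h4 h5 h6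
    have : hexE 1 ⊆ {p | f p ≤ c} := by
      apply convexHull_min _ (convex_halfSpace_le hf c)
      intro v hv
      simp only [Set.mem_insert_iff, Set.mem_singleton_iff] at hv
      rcases hv with rfl|rfl|rfl|rfl|rfl|rfl <;> norm_num <;> assumption
    exact this h
  have keyge : ∀ (f : ℝ×ℝ → ℝ), IsLinearMap ℝ f → ∀ (c : ℝ),
      c ≤ f (tri 1 0) → c ≤ f (tri 1 2) → c ≤ f (tri 0 3) → c ≤ f (tri (-2) 3) →
      c ≤ f (tri (-2) 2) → c ≤ f (tri 0 0) → c ≤ f (tri a b) := by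
    intro f hf c h1 h2 h3 h4 h5 h6
    have : hexE 1 ⊆ {p | c ≤ f p} := by
      apply convexHull_min _ (convex_halfSpace_ge hf c)
      intro v hv
      simp only [Set.mem_insert_iff, Set.mem_singleton_iff] at hv
      rcases hv with rfl|rfl|rfl|rfl|rfl|rfl <;> norm_num <;> assumption
    exact this h
  have ha1 : a ≤ 1 := by
    have := keyle _ hfa (Real.sqrt 3 * 1) ?_ ?_ ?_ ?_ ?_ ?_
    · rw [fa] at this
      have := (mul_le_mul_iff_right₀ hs).mp this
      exact_mod_cast this
    all_goals rw [fa]; push_cast; nlinarith [hs.le]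
  have ha2 : -2 ≤ a := by
    have := keyge _ hfa (Real.sqrt 3 * (-2)) ?_ ?_ ?_ ?_ ?_ ?_
    · rw [fa] at this
      have := (mul_le_mul_iff_right₀ hs).mp this
      exact_mod_cast this
    all_goals rw [fa]; push_cast; nlinarith [hs.le]
  have hb1 : b ≤ 3 := by
    have := keyle _ hfb (3 * Real.sqrt 3 / 2) ?_ ?_ ?_ ?_ ?_ ?_
    · simp only [tri] at this
      have : (b:ℝ) ≤ 3 := by nlinarith
      exact_mod_cast this
    all_goals simp only [tri]; push_cast; nlinarith [hs.le]
  have hb2 : 0 ≤ b := by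
    have := keyge _ hfb 0 ?_ ?_ ?_ ?_ ?_ ?_
    · simp only [tri] at this
      have : (0:ℝ) ≤ (b:ℝ) := by nlinarith
      exact_mod_cast this
    all_goals simp only [tri]; push_cast; nlinarith [hs.le]
  have hab1 : a + b ≤ 3 := by
    have := keyle _ hfab (Real.sqrt 3 * 3) ?_ ?_ ?_ ?_ ?_ ?_
    · rw [fab] at this
      have := (mul_le_mul_iff_right₀ hs).mp this
      exact_mod_cast this
    all_goals rw [fab]; push_cast; nlinarith [hs.le]
  have hab2 : 0 ≤ a + b := by
    have := keyge _ hfab (Real.sqrt 3 * 0) ?_ ?_ ?_ ?_ ?_ ?_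
    · rw [fab] at this
      have := (mul_le_mul_iff_right₀ hs).mp this
      exact_mod_cast this
    all_goals rw [fab]; push_cast; nlinarith [hs.le]
  exact ⟨ha2, ha1, hb2, hb1, hab2, hab1⟩

lemma key_eq : triLattice ∩ hexE 1 = (fun q : ℤ × ℤ => tri q.1 q.2) '' ↑hexPts := by
  ext p
  constructor
  · rintro ⟨⟨a, b, rfl⟩, hp⟩
    obtain ⟨h1, h2, h3, h4, h5, h6⟩ := bounds a b hp
    refine ⟨(a, b), ?_, rfl⟩
    simp only [hexPts, Finset.coe_insert, Set.mem_insert_iff, Finset.coe_singleton,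
      Set.mem_singleton_iff, Prod.mk.injEq]
    omega
  · rintro ⟨⟨a, b⟩, hq, rfl⟩
    exact ⟨⟨a, b, rfl⟩, mem12 a b (by exact_mod_cast hq)⟩

theorem equiangular_1_2_hexagon_five_distance :
    (triLattice ∩ hexE 1).ncard = 12 ∧
      sqdSet (triLattice ∩ hexE 1) = {1, 3, 4, 7, 9} := by
  constructor
  · rw [key_eq, Set.ncard_image_of_injective _ tri_inj, Set.ncard_coe_finset]
    decide
  · have main : ∀ x ∈ hexPts, ∀ y ∈ hexPts, x ≠ y →
        ((x.1-y.1)^2 + (x.1-y.1)*(x.2-y.2) + (x.2-y.2)^2 : ℤ) ∈ ({1,3,4,7,9} : Finset ℤ) := by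
      decide
    have memIS : ∀ a b : ℤ, (a,b) ∈ hexPts → tri a b ∈ triLattice ∩ hexE 1 := by
      intro a b h
      exact ⟨⟨a, b, rfl⟩, mem12 a b h⟩
    ext d
    simp only [sqdSet, Set.mem_setOf_eq]
    constructor
    · rintro ⟨p, hp, q, hq, hne, rfl⟩
      rw [key_eq] at hp hq
      obtain ⟨⟨a, b⟩, ha, rfl⟩ := hp
      obtain ⟨⟨c, e⟩, hc, rfl⟩ := hq
      have hne' : (a, b) ≠ (c, e) := fun h => hne (by rw [h])
      have hm := main (a,b) (by exact_mod_cast ha) (c,e) (by exact_mod_cast hc) hne'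
      rw [sqd_tri]
      simp only [Finset.mem_insert, Finset.mem_singleton] at hm
      rcases hm with h|h|h|h|h <;> rw [h] <;> norm_num [Set.mem_insert_iff]
    · intro hd
      simp only [Set.mem_insert_iff, Set.mem_singleton_iff] at hd
      have hne : ∀ a b c e : ℤ, (a,b) ≠ (c,e) → tri a b ≠ tri c e := by
        intro a b c e h hh
        exact h (tri_inj hh)
      rcases hd with rfl|rfl|rfl|rfl|rfl
      · exact ⟨tri 1 0, memIS 1 0 (by decide), tri 0 0, memIS 0 0 (by decide),
          hne 1 0 0 0 (by decide), by rw [sqd_tri]; norm_num⟩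
      · exact ⟨tri 1 1, memIS 1 1 (by decide), tri 0 0, memIS 0 0 (by decide),
          hne 1 1 0 0 (by decide), by rw [sqd_tri]; norm_num⟩
      · exact ⟨tri 1 1, memIS 1 1 (by decide), tri (-1) 1, memIS (-1) 1 (by decide),
          hne 1 1 (-1) 1 (by decide), by rw [sqd_tri]; norm_num⟩
      · exact ⟨tri 1 2, memIS 1 2 (by decide), tri (-1) 1, memIS (-1) 1 (by decide),
          hne 1 2 (-1) 1 (by decide), by rw [sqd_tri]; norm_num⟩
      · exact ⟨tri 1 2, memIS 1 2 (by decide), tri (-2) 2, memIS (-2) 2 (by decide),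
          hne 1 2 (-2) 2 (by decide), by rw [sqd_tri]; norm_num⟩
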